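/- arXiv:1902.00216 — 3 statements merged into one kernel-verified Lean document; each statement's English description precedes it below -/
import Mathlib

section
/- For any p-string T, the set PrevSub(T) of prev-encoded substrings of T is closed under the implicit suffix link: if u ∈ PrevSub(T) and u is nonempty, then sl(u) ∈ PrevSub(T). (In contrast, u[2:] itself need not belong to PrevSub(T).) -/
open List

variable {σ π : Type*}

/-- The prev-encoding symbol of `w` at (0-indexed) position `i`:
constants are kept; a parameter is encoded by the distance to its
previous occurrence, or `0` if it has no previous occurrence. -/
def prevAt [DecidableEq σ] [DecidableEq π] (w : List (σ ⊕ π)) (i : ℕ) : σ ⊕ ℕ :=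
  match w[i]? with
  | some (Sum.inl a) => Sum.inl a
  | some (Sum.inr x) =>
      let s := (Finset.range i).filter (fun j => w[j]? = some (Sum.inr x))
      if h : s.Nonempty then Sum.inr (i - s.max' h) else Sum.inr 0
  | none => Sum.inr 0

/-- The prev-encoding `⟨w⟩` of a p-string `w`. -/
def prevEncode [DecidableEq σ] [DecidableEq π] (w : List (σ ⊕ π)) : List (σ ⊕ ℕ) :=
  (List.range w.length).map (prevAt w)

/-- The `k`-re-encoding `⟨u⟩ₖ` of a pv-string `u`: a numeric symbol `u[i]`
(1-indexed) is replaced by `0` whenever `u[i] ≥ i - k + 1`. -/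
def reEncode (k : ℕ) (u : List (σ ⊕ ℕ)) : List (σ ⊕ ℕ) :=
  (List.range u.length).map (fun i =>
    match u[i]? with
    | some (Sum.inl a) => Sum.inl a
    | some (Sum.inr m) => if i + 2 ≤ m + k then Sum.inr (0 : ℕ) else Sum.inr m
    | none => Sum.inr 0)

/-- The implicit suffix link `sl(u) = ⟨u[2:]⟩₁`. -/
def sl (u : List (σ ⊕ ℕ)) : List (σ ⊕ ℕ) := reEncode 1 u.tail

/-- The set of prev-encoded substrings of `T`. -/
def PrevSub [DecidableEq σ] [DecidableEq π] (T : List (σ ⊕ π)) : Set (List (σ ⊕ ℕ)) :=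
  { u | ∃ w, w <:+: T ∧ u = prevEncode w }

lemma getElem?_prevEncode [DecidableEq σ] [DecidableEq π] (w : List (σ ⊕ π)) (i : ℕ)
    (h : i < w.length) : (prevEncode w)[i]? = some (prevAt w i) := by
  simp [prevEncode, h]

lemma key [DecidableEq σ] [DecidableEq π] (a : σ ⊕ π) (w' : List (σ ⊕ π)) (i : ℕ)
    (hi : i < w'.length) :
    (match prevAt (a :: w') (i + 1) with
      | Sum.inl b => Sum.inl b
      | Sum.inr m => if i + 2 ≤ m + 1 then Sum.inr (0 : ℕ) else Sum.inr m)
      = prevAt w' i := by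
  have hcons : (a :: w')[i + 1]? = w'[i]? := by simp
  rcases hx : w'[i]? with _ | (b | x)
  · simp [prevAt, hcons, hx]
  · simp [prevAt, hcons, hx]
  · -- parameter case
    set s : Finset ℕ := (Finset.range (i + 1)).filter
        (fun j => (a :: w')[j]? = some (Sum.inr x)) with hs
    set s' : Finset ℕ := (Finset.range i).filter
        (fun j => w'[j]? = some (Sum.inr x)) with hs'
    have mem_s : ∀ j, j ∈ s ↔ j < i + 1 ∧ (a :: w')[j]? = some (Sum.inr x) := by
      intro j; simp [hs]
    have mem_s' : ∀ j, j ∈ s' ↔ j < i ∧ w'[j]? = some (Sum.inr x) := by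
      intro j; simp [hs']
    have hshift : ∀ j, (a :: w')[j + 1]? = w'[j]? := by intro j; simp
    have succ_mem : ∀ j, j ∈ s' → j + 1 ∈ s := by
      intro j hj
      rw [mem_s' j] at hj
      rw [mem_s, hshift]
      exact ⟨by omega, hj.2⟩
    have pred_mem : ∀ j, j + 1 ∈ s → j ∈ s' := by
      intro j hj
      rw [mem_s (j+1), hshift] at hj
      rw [mem_s']
      exact ⟨by omega, hj.2⟩
    by_cases h' : s'.Nonempty
    · set M := s'.max' h' with hM
      have hMmem : M ∈ s' := Finset.max'_mem _ _
      have hMi : M < i := ((mem_s' M).1 hMmem).1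
      have hMs : M + 1 ∈ s := succ_mem M hMmem
      have hsne : s.Nonempty := ⟨M + 1, hMs⟩
      have hmax : s.max' hsne = M + 1 := by
        apply _root_.le_antisymm
        · apply Finset.max'_le
          intro j hj
          match j with
          | 0 => omega
          | j + 1 =>
            have := Finset.le_max' s' j (pred_mem j hj)
            omega
        · exact Finset.le_max' _ _ hMs
      have lhs : prevAt (a :: w') (i + 1) = Sum.inr (i - M) := by
        rw [prevAt, hcons, hx]
        simp only
        rw [dif_pos hsne, hmax]
        congr 1
        omega
      have rhs : prevAt w' i = Sum.inr (i - M) := by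
        rw [prevAt, hx]
        simp only
        rw [dif_pos h']
      rw [lhs, rhs]
      have : ¬ (i + 2 ≤ (i - M) + 1) := by omega
      simp [this]
    · by_cases hsn : s.Nonempty
      · have hzero : ∀ j ∈ s, j = 0 := by
          intro j hj
          match j with
          | 0 => rfl
          | j + 1 => exact absurd (pred_mem j hj) (by simpa [Finset.not_nonempty_iff_eq_empty.1 h'] using (Finset.notMem_empty j))
        have hmax : s.max' hsn = 0 := hzero _ (Finset.max'_mem _ _)
        have lhs : prevAt (a :: w') (i + 1) = Sum.inr (i + 1) := by
          rw [prevAt, hcons, hx]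
          simp only
          rw [dif_pos hsn, hmax]
          simp
        have rhs : prevAt w' i = Sum.inr 0 := by
          rw [prevAt, hx]
          simp only
          rw [dif_neg h']
        rw [lhs, rhs]
        have : i + 2 ≤ i + 1 + 1 := by omega
        simp [this]
      · have lhs : prevAt (a :: w') (i + 1) = Sum.inr 0 := by
          rw [prevAt, hcons, hx]
          simp only
          rw [dif_neg hsn]
        have rhs : prevAt w' i = Sum.inr 0 := by
          rw [prevAt, hx]
          simp only
          rw [dif_neg h']
        rw [lhs, rhs]
        have : ¬ (i + 2 ≤ 0 + 1) := by omega
        simp [this]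

lemma sl_prevEncode [DecidableEq σ] [DecidableEq π] (w : List (σ ⊕ π)) :
    sl (prevEncode w) = prevEncode w.tail := by
  cases w with
  | nil => rfl
  | cons a w' =>
    have hlen : (prevEncode (a :: w')).tail.length = w'.length := by
      simp [prevEncode]
    apply List.ext_getElem
    · simp [sl, reEncode, prevEncode]
    intro i h1 h2
    have hi : i < w'.length := by simpa [prevEncode] using h2
    have htail : (prevEncode (a :: w')).tail[i]? = some (prevAt (a :: w') (i + 1)) := by
      rw [List.getElem?_tail, getElem?_prevEncode]
      simpa using hi
    have : (sl (prevEncode (a :: w')))[i]?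
        = some (match prevAt (a :: w') (i + 1) with
          | Sum.inl b => Sum.inl b
          | Sum.inr m => if i + 2 ≤ m + 1 then Sum.inr (0 : ℕ) else Sum.inr m) := by
      rw [sl, reEncode]
      rw [List.getElem?_map]
      rw [List.getElem?_range (by simpa [hlen] using hi)]
      simp only [Option.map_some]
      rw [htail]
      rcases prevAt (a :: w') (i + 1) with b | m <;> rfl
    rw [← Option.some_inj, ← List.getElem?_eq_getElem, ← List.getElem?_eq_getElem, this]
    simp only [List.tail_cons] at *
    rw [getElem?_prevEncode _ _ hi]
    exact congrArg some (key a w' i hi)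

/-- `PrevSub T` is closed under the implicit suffix link. -/
theorem sl_mem_prevSub [DecidableEq σ] [DecidableEq π]
    (T : List (σ ⊕ π)) (u : List (σ ⊕ ℕ)) (hu : u ∈ PrevSub T) (hne : u ≠ []) :
    sl u ∈ PrevSub T := by
  obtain ⟨w, hw, rfl⟩ := hu
  exact ⟨w.tail, (List.tail_suffix w).isInfix.trans hw, sl_prevEncode w⟩
end

section
/- Let w be a p-string with |w| ≥ 2 and let 2 ≤ j ≤ |w|. If ⟨w⟩[j] = j − 1 (as a natural number), then ⟨w[2:]⟩[j−1] = 0; otherwise ⟨w[2:]⟩[j−1] = ⟨w⟩[j]. In particular, the prev-encoding of the suffix w[2:] differs from the shifted prev-encoding of w in at most one position. -/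
open List

variable {σ π : Type*}

lemma prevEncode_getElem? [DecidableEq σ] [DecidableEq π] (w : List (σ ⊕ π)) (k : ℕ)
    (hk : k < w.length) : (prevEncode w)[k]? = some (prevAt w k) := by
  simp [prevEncode, hk]

lemma prevAt_tail [DecidableEq σ] [DecidableEq π] (w : List (σ ⊕ π)) (i : ℕ)
    (h1 : 1 ≤ i) (h2 : i < w.length) :
    prevAt w.tail (i - 1) =
      if prevAt w i = Sum.inr i then Sum.inr 0 else prevAt w i := by
  have hti : w.tail[i-1]? = w[i]? := by
    rw [List.getElem?_tail]; congr 1; omega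
  obtain ⟨c, hc⟩ : ∃ c, w[i]? = some c := ⟨w[i], List.getElem?_eq_getElem h2⟩
  match c with
  | Sum.inl a =>
    rw [prevAt, prevAt, hti, hc]
    simp
  | Sum.inr x =>
    rw [prevAt, prevAt, hti, hc]
    simp only
    set s := (Finset.range i).filter (fun j => w[j]? = some (Sum.inr x)) with hs
    set s' := (Finset.range (i-1)).filter (fun j => w.tail[j]? = some (Sum.inr x)) with hs'
    have hmem : ∀ j, j ∈ s' ↔ j + 1 ∈ s := by
      intro j
      simp only [hs, hs', Finset.mem_filter, Finset.mem_range, List.getElem?_tail]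
      constructor
      · rintro ⟨hj, hj2⟩; exact ⟨by omega, hj2⟩
      · rintro ⟨hj, hj2⟩; exact ⟨by omega, hj2⟩
    by_cases hne : s.Nonempty
    · have hmax_lt : s.max' hne < i := by
        have := Finset.max'_mem s hne
        simp only [hs, Finset.mem_filter, Finset.mem_range] at this
        exact this.1
      by_cases hm0 : s.max' hne = 0
      · -- s' is empty, prevAt w i = inr i
        have hempty : ¬ s'.Nonempty := by
          rintro ⟨j, hj⟩
          have := Finset.le_max' s (j+1) ((hmem j).1 hj)
          omega
        rw [dif_pos hne, dif_neg hempty, hm0]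
        simp [Nat.sub_zero]
      · -- max ≥ 1
        have hm1 : 1 ≤ s.max' hne := Nat.one_le_iff_ne_zero.mpr hm0
        have hne' : s'.Nonempty := by
          refine ⟨s.max' hne - 1, (hmem _).2 ?_⟩
          have : s.max' hne - 1 + 1 = s.max' hne := by omega
          rw [this]; exact Finset.max'_mem s hne
        have hmax' : s'.max' hne' = s.max' hne - 1 := by
          apply Nat.le_antisymm
          · apply Finset.max'_le
            intro j hj
            have := Finset.le_max' s (j+1) ((hmem j).1 hj)
            omega
          · apply Finset.le_max'
            refine (hmem _).2 ?_
            have : s.max' hne - 1 + 1 = s.max' hne := by omega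
            rw [this]; exact Finset.max'_mem s hne
        rw [dif_pos hne, dif_pos hne', hmax']
        rw [if_neg (by simp; omega)]
        congr 1
        omega
    · have hempty : ¬ s'.Nonempty := by
        rintro ⟨j, hj⟩
        exact hne ⟨j+1, (hmem j).1 hj⟩
      rw [dif_neg hne, dif_neg hempty]
      rw [if_neg (by simp; omega)]


/-- For `2 ≤ j ≤ |w|` (1-indexed): if `⟨w⟩[j] = j − 1` then `⟨w[2:]⟩[j−1] = 0`;
otherwise `⟨w[2:]⟩[j−1] = ⟨w⟩[j]`. -/
theorem prevEncode_tail_dichotomy [DecidableEq σ] [DecidableEq π]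
    (w : List (σ ⊕ π)) (hw : 2 ≤ w.length) (j : ℕ) (hj1 : 2 ≤ j) (hj2 : j ≤ w.length) :
    ((prevEncode w)[j - 1]? = some (Sum.inr (j - 1)) →
      (prevEncode w.tail)[j - 2]? = some (Sum.inr (0 : ℕ))) ∧
    ((prevEncode w)[j - 1]? ≠ some (Sum.inr (j - 1)) →
      (prevEncode w.tail)[j - 2]? = (prevEncode w)[j - 1]?) := by
  have h1 : j - 1 < w.length := by omega
  have h2 : j - 2 < w.tail.length := by rw [List.length_tail]; omega
  rw [prevEncode_getElem? w _ h1, prevEncode_getElem? w.tail _ h2]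
  have key := prevAt_tail w (j-1) (by omega) (by omega)
  have hjj : j - 1 - 1 = j - 2 := by omega
  rw [hjj] at key
  constructor
  · intro h
    rw [key, if_pos (by rw [Option.some_inj] at h; exact h)]
  · intro h
    rw [key, if_neg (fun hcon => h (by rw [hcon]))]
end

section
/- Let T be a p-string of length n ≥ 1 ending with a sentinel symbol $ ∈ Σ that occurs nowhere else in T. Then the number of Type 1 nodes, i.e., elements of PrevSub(T) that are leaves or branching, is at most 2n. -/
open List

variable {σ π : Type*}

/-- `u` is a leaf of `PrevSub T`: it belongs to `PrevSub T` and is not a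
proper prefix of any element of `PrevSub T`. -/
def IsLeaf [DecidableEq σ] [DecidableEq π] (T : List (σ ⊕ π)) (u : List (σ ⊕ ℕ)) : Prop :=
  u ∈ PrevSub T ∧ ∀ v ∈ PrevSub T, u <+: v → u = v

/-- `u` is a branching element of `PrevSub T`: two distinct one-symbol
extensions of `u` belong to `PrevSub T`. -/
def Branching [DecidableEq σ] [DecidableEq π] (T : List (σ ⊕ π)) (u : List (σ ⊕ ℕ)) : Prop :=
  u ∈ PrevSub T ∧
    ∃ a b : σ ⊕ ℕ, a ≠ b ∧ u ++ [a] ∈ PrevSub T ∧ u ++ [b] ∈ PrevSub T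

lemma prevAt_append_left [DecidableEq σ] [DecidableEq π] (w v : List (σ ⊕ π)) {i : ℕ}
    (hi : i < w.length) : prevAt (w ++ v) i = prevAt w i := by
  have hget : ∀ j ≤ i, (w ++ v)[j]? = w[j]? := fun j hj =>
    List.getElem?_append_left (lt_of_le_of_lt hj hi)
  unfold prevAt
  rw [hget i le_rfl]
  have hfil : ∀ x : π, (Finset.range i).filter (fun j => (w ++ v)[j]? = some (Sum.inr x))
      = (Finset.range i).filter (fun j => w[j]? = some (Sum.inr x)) := by
    intro x
    apply Finset.filter_congr
    intro j hj
    rw [Finset.mem_range] at hj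
    simp [hget j hj.le]
  cases h : w[i]? with
  | none => rfl
  | some c => cases c with
    | inl a => rfl
    | inr x => simp only [hfil x]

lemma prevEncode_length [DecidableEq σ] [DecidableEq π] (w : List (σ ⊕ π)) :
    (prevEncode w).length = w.length := by simp [prevEncode]

lemma prevEncode_prefix [DecidableEq σ] [DecidableEq π] (w v : List (σ ⊕ π)) :
    prevEncode w <+: prevEncode (w ++ v) := by
  refine ⟨(List.range' w.length v.length).map (prevAt (w ++ v)), ?_⟩
  rw [prevEncode, prevEncode, List.length_append, List.range_add]
  rw [List.map_append, List.map_map]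
  congr 1
  · apply List.map_congr_left
    intro i hi
    rw [List.mem_range] at hi
    exact (prevAt_append_left w v hi).symm
  · rw [← List.map_map]
    congr 1
    rw [List.range'_eq_map_range]

lemma prevSub_finite [DecidableEq σ] [DecidableEq π] (T : List (σ ⊕ π)) :
    (PrevSub T).Finite := by
  have : PrevSub T ⊆ prevEncode '' {w | w ∈ T.sublists} := by
    rintro u ⟨w, hw, rfl⟩
    exact ⟨w, by simp [List.mem_sublists, hw.sublist], rfl⟩
  exact Set.Finite.subset ((T.sublists.finite_toSet).image _) this

lemma mem_prevSub_length_le [DecidableEq σ] [DecidableEq π] {T : List (σ ⊕ π)}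
    {u : List (σ ⊕ ℕ)} (h : u ∈ PrevSub T) : u.length ≤ T.length := by
  obtain ⟨w, hw, rfl⟩ := h
  rw [prevEncode_length]
  exact hw.length_le

lemma exists_leaf_above [DecidableEq σ] [DecidableEq π] {T : List (σ ⊕ π)}
    {u : List (σ ⊕ ℕ)} (h : u ∈ PrevSub T) : ∃ ℓ, IsLeaf T ℓ ∧ u <+: ℓ := by
  classical
  set S : Set (List (σ ⊕ ℕ)) := {v ∈ PrevSub T | u <+: v} with hS
  have hSfin : S.Finite := (prevSub_finite T).subset (fun v hv => hv.1)
  have hSne : S.Nonempty := ⟨u, h, List.prefix_rfl⟩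
  obtain ⟨v, hvS, hvmax⟩ := Set.Finite.exists_maximalFor List.length S hSfin hSne
  refine ⟨v, ⟨hvS.1, ?_⟩, hvS.2⟩
  intro w hw hvw
  have hwS : w ∈ S := ⟨hw, hvS.2.trans hvw⟩
  have : v.length = w.length := le_antisymm hvw.length_le (hvmax hwS hvw.length_le)
  exact List.IsPrefix.eq_of_length hvw this

lemma leaf_eq_suffix [DecidableEq σ] [DecidableEq π] {T : List (σ ⊕ π)}
    (hT : T ≠ []) {u : List (σ ⊕ ℕ)} (h : IsLeaf T u) :
    ∃ k < T.length, u = prevEncode (T.drop k) := by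
  obtain ⟨⟨w, hw, rfl⟩, hleaf⟩ := h
  obtain ⟨s, t, hst⟩ := hw
  cases t with
  | cons c t' =>
    exfalso
    have hmem : prevEncode (w ++ [c]) ∈ PrevSub T :=
      ⟨w ++ [c], ⟨s, t', by rw [← hst]; simp⟩, rfl⟩
    have := hleaf _ hmem (prevEncode_prefix w [c])
    have hlen := congrArg List.length this
    simp [prevEncode_length] at hlen
  | nil =>
    rw [List.append_nil] at hst
    rcases eq_or_ne w [] with rfl | hwne
    · exfalso
      have hmem : prevEncode T ∈ PrevSub T := ⟨T, List.infix_rfl, rfl⟩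
      have hpre : prevEncode ([] : List (σ ⊕ π)) <+: prevEncode T := by
        simp [prevEncode]
      have := hleaf _ hmem hpre
      have hlen := congrArg List.length this
      simp [prevEncode_length] at hlen
      exact hT (List.eq_nil_of_length_eq_zero hlen.symm)
    · refine ⟨s.length, ?_, ?_⟩
      · have : s.length + w.length = T.length := by
          rw [← hst]; simp
        have hw1 : 1 ≤ w.length := List.length_pos_iff.mpr hwne
        omega
      · rw [← hst, List.drop_left]


section BranchingCount
variable [DecidableEq σ] [DecidableEq π] [LinearOrder (σ ⊕ ℕ)]

noncomputable def charFinset (T : List (σ ⊕ π)) (u : List (σ ⊕ ℕ)) : Finset (σ ⊕ ℕ) :=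
  (Set.Finite.preimage
    (Set.injOn_of_injective (f := fun a : σ ⊕ ℕ => u ++ [a])
      (fun a b hab => by simpa using hab))
    (prevSub_finite T)).toFinset

lemma mem_charFinset {T : List (σ ⊕ π)} {u : List (σ ⊕ ℕ)} {a : σ ⊕ ℕ} :
    a ∈ charFinset T u ↔ u ++ [a] ∈ PrevSub T := by
  simp [charFinset]

noncomputable def sndChar (T : List (σ ⊕ π)) (u : List (σ ⊕ ℕ)) : σ ⊕ ℕ :=
  WithTop.untopD (Sum.inr 0) ((charFinset T u).erase (WithTop.untopD (Sum.inr 0) (charFinset T u).min)).min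

lemma sndChar_spec {T : List (σ ⊕ π)} {u : List (σ ⊕ ℕ)} (h : Branching T u) :
    u ++ [sndChar T u] ∈ PrevSub T ∧
      ∃ a, u ++ [a] ∈ PrevSub T ∧ a < sndChar T u := by
  obtain ⟨-, a, b, hab, ha, hb⟩ := h
  have haS : a ∈ charFinset T u := mem_charFinset.mpr ha
  have hbS : b ∈ charFinset T u := mem_charFinset.mpr hb
  have hne : (charFinset T u).Nonempty := ⟨a, haS⟩
  have hmin : WithTop.untopD (Sum.inr 0) (charFinset T u).min = (charFinset T u).min' hne := by
    rw [← Finset.coe_min' hne, WithTop.untopD_coe]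
  set m := WithTop.untopD (Sum.inr 0) (charFinset T u).min with hm
  have hmS : m ∈ charFinset T u := by rw [hmin]; exact Finset.min'_mem _ _
  have hene : ((charFinset T u).erase m).Nonempty := by
    rcases eq_or_ne a m with heq | hne'
    · exact ⟨b, Finset.mem_erase.mpr ⟨heq ▸ (Ne.symm hab), hbS⟩⟩
    · exact ⟨a, Finset.mem_erase.mpr ⟨hne', haS⟩⟩
  have hsc : sndChar T u = ((charFinset T u).erase m).min' hene := by
    rw [sndChar, ← hm, ← Finset.coe_min' hene, WithTop.untopD_coe]
  have hscE : sndChar T u ∈ (charFinset T u).erase m := by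
    rw [hsc]; exact Finset.min'_mem _ _
  have hscS : sndChar T u ∈ charFinset T u := Finset.mem_of_mem_erase hscE
  refine ⟨mem_charFinset.mp hscS, m, mem_charFinset.mp hmS, ?_⟩
  have hle : m ≤ sndChar T u := by rw [hmin]; exact Finset.min'_le _ _ hscS
  exact lt_of_le_of_ne hle (Ne.symm (Finset.ne_of_mem_erase hscE))

noncomputable def leavesAbove (T : List (σ ⊕ π)) (v : List (σ ⊕ ℕ)) :
    Finset (List (σ ⊕ ℕ)) :=
  Set.Finite.toFinset (s := {ℓ | IsLeaf T ℓ ∧ v <+: ℓ})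
    ((prevSub_finite T).subset (fun ℓ hℓ => hℓ.1.1))

lemma mem_leavesAbove {T : List (σ ⊕ π)} {v ℓ : List (σ ⊕ ℕ)} :
    ℓ ∈ leavesAbove T v ↔ IsLeaf T ℓ ∧ v <+: ℓ := by
  simp [leavesAbove]

noncomputable def minLeafAbove (T : List (σ ⊕ π)) (v : List (σ ⊕ ℕ)) : List (σ ⊕ ℕ) :=
  WithTop.untopD [] (leavesAbove T v).min

lemma minLeafAbove_mem {T : List (σ ⊕ π)} {v : List (σ ⊕ ℕ)} (hv : v ∈ PrevSub T) :
    IsLeaf T (minLeafAbove T v) ∧ v <+: minLeafAbove T v := by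
  obtain ⟨ℓ, hℓ, hpre⟩ := exists_leaf_above hv
  have hne : (leavesAbove T v).Nonempty := ⟨ℓ, mem_leavesAbove.mpr ⟨hℓ, hpre⟩⟩
  have : minLeafAbove T v = (leavesAbove T v).min' hne := by
    rw [minLeafAbove, ← Finset.coe_min' hne, WithTop.untopD_coe]
  rw [this]
  exact mem_leavesAbove.mp (Finset.min'_mem _ _)

lemma minLeafAbove_le {T : List (σ ⊕ π)} {v ℓ : List (σ ⊕ ℕ)}
    (hℓ : IsLeaf T ℓ) (hpre : v <+: ℓ) : minLeafAbove T v ≤ ℓ := by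
  have hmem : ℓ ∈ leavesAbove T v := mem_leavesAbove.mpr ⟨hℓ, hpre⟩
  have hne : (leavesAbove T v).Nonempty := ⟨ℓ, hmem⟩
  have : minLeafAbove T v = (leavesAbove T v).min' hne := by
    rw [minLeafAbove, ← Finset.coe_min' hne, WithTop.untopD_coe]
  rw [this]
  exact Finset.min'_le _ _ hmem

end BranchingCount

section BranchingCount2
variable [DecidableEq σ] [DecidableEq π] [LinearOrder (σ ⊕ ℕ)]

lemma minLeaf_ne_of_lt {T : List (σ ⊕ π)} {u1 u2 : List (σ ⊕ ℕ)}
    (h1 : Branching T u1) (h2 : Branching T u2) (hlen : u1.length < u2.length)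
    (heq : minLeafAbove T (u1 ++ [sndChar T u1]) = minLeafAbove T (u2 ++ [sndChar T u2])) :
    False := by
  obtain ⟨hb1, -⟩ := sndChar_spec h1
  obtain ⟨hb2, a2, ha2, ha2lt⟩ := sndChar_spec h2
  set ℓ := minLeafAbove T (u2 ++ [sndChar T u2]) with hℓdef
  obtain ⟨hℓleaf, hpre2⟩ := minLeafAbove_mem hb2
  have hpre1 : u1 ++ [sndChar T u1] <+: ℓ := by
    rw [← heq]; exact (minLeafAbove_mem hb1).2
  -- u1 ++ [b1] is a prefix of u2
  have hpu2 : u1 ++ [sndChar T u1] <+: u2 := by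
    have h12 : u1 ++ [sndChar T u1] <+: u2 ++ [sndChar T u2] :=
      List.prefix_of_prefix_length_le hpre1 hpre2 (by simp; omega)
    exact List.prefix_of_prefix_length_le h12 (List.prefix_append u2 [sndChar T u2])
      (by simp; omega)
  -- a leaf above u2 ++ [a2]
  obtain ⟨ℓ', hℓ'leaf, hℓ'pre⟩ := exists_leaf_above ha2
  have hpre1' : u1 ++ [sndChar T u1] <+: ℓ' :=
    hpu2.trans ((List.prefix_append u2 [a2]).trans hℓ'pre)
  have hle : ℓ ≤ ℓ' := by
    have := minLeafAbove_le hℓ'leaf hpre1'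
    rwa [heq] at this
  have hlt : ℓ' < ℓ := by
    obtain ⟨r', hr'⟩ := hℓ'pre
    obtain ⟨r, hr⟩ := hpre2
    rw [← hr', hℓdef, ← hr]
    simp only [List.append_assoc, List.singleton_append]
    show List.Lex (· < ·) _ _
    exact List.Lex.append_left _ (List.Lex.rel ha2lt) u2
  exact absurd hle (not_le_of_gt hlt)

end BranchingCount2

section Count
variable [DecidableEq σ] [DecidableEq π] [LinearOrder (σ ⊕ ℕ)]

lemma branching_ncard_le_leaf (T : List (σ ⊕ π)) :
    {u : List (σ ⊕ ℕ) | Branching T u}.ncard ≤ {u : List (σ ⊕ ℕ) | IsLeaf T u}.ncard := by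
  have hLfin : {u : List (σ ⊕ ℕ) | IsLeaf T u}.Finite :=
    (prevSub_finite T).subset (fun u hu => hu.1)
  refine Set.ncard_le_ncard_of_injOn
    (fun u => minLeafAbove T (u ++ [sndChar T u])) ?_ ?_ hLfin
  · intro u hu
    exact (minLeafAbove_mem (sndChar_spec hu).1).1
  · intro u1 h1 u2 h2 heq
    simp only [Set.mem_setOf_eq] at h1 h2
    dsimp only at heq
    rcases lt_trichotomy u1.length u2.length with h | h | h
    · exact absurd heq (fun heq => minLeaf_ne_of_lt h1 h2 h heq)
    · -- equal lengths: both prefixes of the common leaf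
      have hp1 : u1 <+: minLeafAbove T (u1 ++ [sndChar T u1]) :=
        (List.prefix_append u1 _).trans (minLeafAbove_mem (sndChar_spec h1).1).2
      have hp2 : u2 <+: minLeafAbove T (u1 ++ [sndChar T u1]) := by
        rw [heq]
        exact (List.prefix_append u2 _).trans (minLeafAbove_mem (sndChar_spec h2).1).2
      exact (List.prefix_of_prefix_length_le hp1 hp2 h.le).eq_of_length h
    · exact absurd heq.symm (fun heq => minLeaf_ne_of_lt h2 h1 h heq)

end Count


/-- For a text of length `n ≥ 1` ending with a sentinel occurring nowhere else,
the number of Type 1 nodes (leaves or branching elements of `PrevSub T`)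
is at most `2n`. -/
theorem card_type1_le [DecidableEq σ] [DecidableEq π]
    (T' : List (σ ⊕ π)) (d : σ) (T : List (σ ⊕ π))
    (hT : T = T' ++ [Sum.inl d]) (hd : Sum.inl d ∉ T') :
    {u : List (σ ⊕ ℕ) | IsLeaf T u ∨ Branching T u}.Finite ∧
      {u : List (σ ⊕ ℕ) | IsLeaf T u ∨ Branching T u}.ncard ≤ 2 * T.length := by
    classical
  letI : LinearOrder (σ ⊕ ℕ) := IsWellOrder.linearOrder WellOrderingRel
  have hTne : T ≠ [] := by simp [hT]
  have hLfin : {u : List (σ ⊕ ℕ) | IsLeaf T u}.Finite :=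
    (prevSub_finite T).subset (fun u hu => hu.1)
  have hBfin : {u : List (σ ⊕ ℕ) | Branching T u}.Finite :=
    (prevSub_finite T).subset (fun u hu => hu.1)
  have hsplit : {u : List (σ ⊕ ℕ) | IsLeaf T u ∨ Branching T u}
      = {u : List (σ ⊕ ℕ) | IsLeaf T u} ∪ {u : List (σ ⊕ ℕ) | Branching T u} := rfl
  have hLcard : {u : List (σ ⊕ ℕ) | IsLeaf T u}.ncard ≤ T.length := by
    have hsub : {u : List (σ ⊕ ℕ) | IsLeaf T u} ⊆
        (fun k => prevEncode (T.drop k)) '' ↑(Finset.range T.length) := by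
      intro u hu
      obtain ⟨k, hk, hku⟩ := leaf_eq_suffix hTne hu
      exact ⟨k, by simpa using hk, hku.symm⟩
    calc {u : List (σ ⊕ ℕ) | IsLeaf T u}.ncard
        ≤ ((fun k => prevEncode (T.drop k)) '' ↑(Finset.range T.length)).ncard :=
          Set.ncard_le_ncard hsub ((Finset.range T.length).finite_toSet.image _)
      _ ≤ (↑(Finset.range T.length) : Set ℕ).ncard :=
          Set.ncard_image_le (Finset.range T.length).finite_toSet
      _ = T.length := by rw [Set.ncard_coe_finset, Finset.card_range]
  constructor
  · rw [hsplit]; exact hLfin.union hBfin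
  · rw [hsplit]
    calc ({u : List (σ ⊕ ℕ) | IsLeaf T u} ∪ {u : List (σ ⊕ ℕ) | Branching T u}).ncard
        ≤ {u : List (σ ⊕ ℕ) | IsLeaf T u}.ncard
            + {u : List (σ ⊕ ℕ) | Branching T u}.ncard := Set.ncard_union_le _ _
      _ ≤ T.length + T.length :=
          Nat.add_le_add hLcard ((branching_ncard_le_leaf T).trans hLcard)
      _ = 2 * T.length := by ring
end
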